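/- For every fixed natural number j, the probability that a uniformly random permutation of a set of N elements has exactly j fixed points converges, as N → ∞, to the Poisson(1) probability e^{−1}/j!; that is, (number of permutations of an N-element set with exactly j fixed points)/N! → e^{−1}/j! as N → ∞. -/

import Mathlib

open Filter

lemma fiber_card_eq {N : ℕ} (s : Finset (Fin N)) :
    (Finset.univ.filter fun π : Equiv.Perm (Fin N) =>
        (Finset.univ.filter fun i => π i = i) = s).card
      = numDerangements (N - s.card) := by
  have h1 : (Finset.univ.filter fun π : Equiv.Perm (Fin N) =>
        (Finset.univ.filter fun i => π i = i) = s).card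
      = Fintype.card {π : Equiv.Perm (Fin N) //
          ∀ a, ¬ (a ∉ s) ↔ a ∈ Function.fixedPoints π} := by
    rw [Fintype.card_subtype]
    congr 1
    apply Finset.filter_congr
    intro π _
    simp only [Finset.ext_iff, Finset.mem_filter, Finset.mem_univ, true_and, not_not,
      Function.mem_fixedPoints, Function.IsFixedPt]
    exact ⟨fun h a => (h a).symm, fun h a => (h a).symm⟩
  rw [h1, ← Fintype.card_congr (derangements.subtypeEquiv (fun a : Fin N => a ∉ s)),
    card_derangements_eq_numDerangements]
  congr 1
  rw [Fintype.card_subtype]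
  simp [Finset.filter_not, Finset.card_sdiff_of_subset (Finset.subset_univ s)]

lemma count_fixedPoints_eq (N j : ℕ) :
    (Finset.univ.filter fun π : Equiv.Perm (Fin N) =>
        (Finset.univ.filter fun i => π i = i).card = j).card
      = N.choose j * numDerangements (N - j) := by
  rw [Finset.card_eq_sum_card_fiberwise
    (f := fun π : Equiv.Perm (Fin N) => Finset.univ.filter fun i => π i = i)
    (t := Finset.univ.powersetCard j)
    (fun π hπ => by
      simp only [Finset.mem_coe, Finset.mem_filter] at hπ
      simp [Finset.mem_powersetCard, hπ.2])]
  have : ∀ s ∈ Finset.univ.powersetCard j,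
      ((Finset.univ.filter fun π : Equiv.Perm (Fin N) =>
          (Finset.univ.filter fun i => π i = i).card = j).filter
        (fun π => (Finset.univ.filter fun i => π i = i) = s)).card
      = numDerangements (N - j) := by
    intro s hs
    rw [Finset.mem_powersetCard] at hs
    rw [Finset.filter_filter]
    have : ∀ π : Equiv.Perm (Fin N),
        ((Finset.univ.filter fun i => π i = i).card = j ∧
          (Finset.univ.filter fun i => π i = i) = s)
        ↔ (Finset.univ.filter fun i => π i = i) = s := by
      intro π
      constructor
      · exact fun h => h.2
      · intro h; exact ⟨by rw [h, hs.2], h⟩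
    rw [Finset.filter_congr (fun π _ => this π), fiber_card_eq, hs.2]
  rw [Finset.sum_congr rfl this, Finset.sum_const, smul_eq_mul]
  congr 1
  simp [Finset.card_powersetCard]

/-- **Poisson limit for fixed points of random permutations.** For every fixed
`j`, the probability that a uniformly random permutation of an `N`-element set
has exactly `j` fixed points tends to `e⁻¹ / j!` as `N → ∞`. -/
theorem fixedPoints_tendsto_poisson (j : ℕ) :
    Tendsto
      (fun N : ℕ =>
        ((Finset.univ.filter fun π : Equiv.Perm (Fin N) =>
            (Finset.univ.filter fun i => π i = i).card = j).card : ℝ)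
          / (Nat.factorial N : ℝ))
      atTop
      (nhds (Real.exp (-1) / (Nat.factorial j : ℝ))) := by
  have key : Tendsto
      (fun N : ℕ => (numDerangements (N - j) : ℝ) / (Nat.factorial (N - j) : ℝ)
        / (Nat.factorial j : ℝ)) atTop
      (nhds (Real.exp (-1) / (Nat.factorial j : ℝ))) := by
    apply Tendsto.div_const
    exact (numDerangements_tendsto_inv_e).comp (tendsto_sub_atTop_nat j)
  apply key.congr'
  filter_upwards [eventually_ge_atTop j] with N hN
  rw [count_fixedPoints_eq]
  have hfac : (N.factorial : ℝ) = N.choose j * (Nat.factorial j * Nat.factorial (N - j)) := by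
    rw [← Nat.choose_mul_factorial_mul_factorial hN]
    push_cast
    ring
  have h0 : (N.choose j : ℝ) ≠ 0 := by
    simp [Nat.choose_eq_zero_iff, not_lt.mpr hN]
  rw [hfac]
  push_cast
  field_simp
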